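/- Let Γ be a finite connected tree with weights a_v whose intersection matrix Q_Γ is negative definite, rooted at ρ. If v has children c_1,...,c_s with rooted subtree matrices Q_{c_1},...,Q_{c_s}, then β_v := (Q_v^{-1} z_v)_v satisfies β_v = -α_v (z_v - Σ_{i=1}^s β_{c_i}), where α_v = -(Q_v^{-1})_{vv} and z is the vector with entries z_u = a_u - 2 restricted to the subtree at v. -/

import Mathlib

open scoped Matrix
open scoped Classical

set_option linter.unusedSectionVars false
set_option linter.unusedVariables false
set_option maxHeartbeats 1000000

/-- `α_v = -(Q_v⁻¹)_{vv}`, where `Q_v` is the principal submatrix of `Q`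
indexed by the rooted subtree at `v` (the descendants of `v` for `par`). -/
noncomputable def subAlpha {V : Type*} [Fintype V] [DecidableEq V]
    (par : V → V) (Q : Matrix V V ℚ) (v : V) : ℚ :=
  -(((Q.submatrix (Subtype.val : {u : V // ∃ m, par^[m] u = v} → V) Subtype.val)⁻¹)
      (⟨v, ⟨0, rfl⟩⟩ : {u : V // ∃ m, par^[m] u = v})
      (⟨v, ⟨0, rfl⟩⟩ : {u : V // ∃ m, par^[m] u = v}))

/-- `β_v = (Q_v⁻¹ z_v)_v`, where `z_u = a_u - 2` restricted to the subtree at `v`. -/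
noncomputable def subBeta {V : Type*} [Fintype V] [DecidableEq V]
    (par : V → V) (Q : Matrix V V ℚ) (a : V → ℤ) (v : V) : ℚ :=
  (((Q.submatrix (Subtype.val : {u : V // ∃ m, par^[m] u = v} → V) Subtype.val)⁻¹).mulVec
      (fun u : {u : V // ∃ m, par^[m] u = v} => (a u.val : ℚ) - 2))
    (⟨v, ⟨0, rfl⟩⟩ : {u : V // ∃ m, par^[m] u = v})

noncomputable def solAt {V : Type*} [Fintype V] [DecidableEq V]
    (par : V → V) (Q : Matrix V V ℚ) (b : V → ℚ) (v : V) : ℚ :=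
  (((Q.submatrix (Subtype.val : {u : V // ∃ m, par^[m] u = v} → V) Subtype.val)⁻¹).mulVec
      (fun u : {u : V // ∃ m, par^[m] u = v} => b u.val))
    (⟨v, ⟨0, rfl⟩⟩ : {u : V // ∃ m, par^[m] u = v})

section Helpers
variable {V : Type*} [Fintype V] [DecidableEq V]
variable {ρ : V} {par : V → V} {depth : V → ℕ}
variable {a : V → ℤ} {Q : Matrix V V ℚ}

lemma depth_iter (hroot : par ρ = ρ) (hdepth : ∀ v, v ≠ ρ → depth (par v) + 1 = depth v) :
    ∀ (m : ℕ) (v : V), par^[m] v = ρ ∨ depth (par^[m] v) + m = depth v := by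
  intro m
  induction m with
  | zero => intro v; right; simp
  | succ m ih =>
    intro v
    by_cases hr : par^[m+1] v = ρ
    · exact Or.inl hr
    · right
      have hw : par^[m] v ≠ ρ := by
        intro hc; exact hr (by rw [Function.iterate_succ_apply', hc, hroot])
      rcases ih v with h | h
      · exact absurd h hw
      · have := hdepth _ hw
        rw [Function.iterate_succ_apply']
        omega

lemma no_cycle (hroot : par ρ = ρ) (hdepth : ∀ v, v ≠ ρ → depth (par v) + 1 = depth v)
    {m : ℕ} {v : V} (hm : m ≠ 0) (h : par^[m] v = v) : v = ρ := by
  rcases depth_iter hroot hdepth m v with h' | h'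
  · rw [h] at h'; exact h'
  · rw [h] at h'; omega

lemma mem_trans {u c v : V} (h1 : ∃ m, par^[m] u = c) (h2 : ∃ k, par^[k] c = v) :
    ∃ n, par^[n] u = v := by
  obtain ⟨m, h1⟩ := h1; obtain ⟨k, h2⟩ := h2
  exact ⟨k + m, by rw [Function.iterate_add_apply, h1, h2]⟩

lemma parent_not_mem (hroot : par ρ = ρ) (hdepth : ∀ v, v ≠ ρ → depth (par v) + 1 = depth v)
    {c v : V} (hc : par c = v) (hcρ : c ≠ ρ) : ¬ ∃ m, par^[m] v = c := by
  rintro ⟨m, hm⟩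
  have : par^[m+1] v = v := by rw [Function.iterate_succ_apply', hm, hc]
  have hv := no_cycle hroot hdepth (by omega) this
  subst hv
  exact hcρ (by rw [← hm, Function.iterate_fixed hroot])

lemma children_disj (hroot : par ρ = ρ) (hdepth : ∀ v, v ≠ ρ → depth (par v) + 1 = depth v)
    {c c' v u : V} (hc : par c = v) (hcρ : c ≠ ρ)
    (hc' : par c' = v) (hc'ρ : c' ≠ ρ)
    (h1 : ∃ m, par^[m] u = c) (h2 : ∃ m, par^[m] u = c') : c = c' := by
  -- wlog helper
  have aux : ∀ {c c' : V}, par c = v → c ≠ ρ → par c' = v → c' ≠ ρ →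
      ∀ {m k : ℕ}, m ≤ k → par^[m] u = c → par^[k] u = c' → c = c' := by
    intro c c' hc hcρ hc' hc'ρ m k hmk h1 h2
    have hj : par^[k-m] c = c' := by
      rw [← h1, ← Function.iterate_add_apply]
      rw [show k - m + m = k by omega]
      exact h2
    rcases Nat.eq_or_lt_of_le hmk with he | hlt
    · rw [← hj, he, Nat.sub_self]; rfl
    · exfalso
      have hjpos : k - m ≠ 0 := by omega
      have hcycle : par^[k-m] v = v := by
        conv_lhs => rw [← hc]
        rw [← Function.iterate_succ_apply]
        rw [Function.iterate_succ_apply', hj, hc']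
      have hv := no_cycle hroot hdepth hjpos hcycle
      subst hv
      apply hc'ρ
      rw [← hj, show k - m = (k-m-1)+1 by omega, Function.iterate_succ_apply, hc]
      exact Function.iterate_fixed hroot (k-m-1)
  obtain ⟨m, h1'⟩ := h1; obtain ⟨k, h2'⟩ := h2
  rcases le_total m k with h | h
  · exact aux hc hcρ hc' hc'ρ h h1' h2'
  · exact (aux hc' hc'ρ hc hcρ h h2' h1').symm

lemma mem_child (hroot : par ρ = ρ) (hdepth : ∀ v, v ≠ ρ → depth (par v) + 1 = depth v)
    {u v : V} (hu : ∃ m, par^[m] u = v) (hne : u ≠ v) :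
    ∃ c, par c = v ∧ c ≠ ρ ∧ ∃ k, par^[k] u = c := by
  classical
  have hm0 : Nat.find hu ≠ 0 := by
    intro h0
    have := Nat.find_spec hu
    rw [h0] at this
    exact hne this
  set m := Nat.find hu with hm
  refine ⟨par^[m-1] u, ?_, ?_, ⟨m-1, rfl⟩⟩
  · calc par (par^[m-1] u) = par^[m-1+1] u := (Function.iterate_succ_apply' par (m-1) u).symm
    _ = v := by rw [show m - 1 + 1 = m by omega]; exact Nat.find_spec hu
  · intro hcρ
    have hvρ : v = ρ := by
      rw [← Nat.find_spec hu, ← hm, show m = (m-1)+1 by omega,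
        Function.iterate_succ_apply', hcρ, hroot]
    exact Nat.find_min hu (m := m - 1) (by omega) (by rw [hcρ, hvρ])


lemma q_support
    (hroot : par ρ = ρ) (hdepth : ∀ v, v ≠ ρ → depth (par v) + 1 = depth v)
    (hQ : ∀ u v, Q u v =
      if u = v then -(a u : ℚ)
      else if (par u = v ∧ u ≠ ρ) ∨ (par v = u ∧ v ≠ ρ) then 1 else 0)
    {c v u w : V} (hc : par c = v) (hcρ : c ≠ ρ)
    (hu : ∃ m, par^[m] u = c) (hQuw : Q u w ≠ 0) :
    (∃ k, par^[k] w = c) ∨ (u = c ∧ w = v) := by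
  rw [hQ] at hQuw
  split at hQuw
  · next h => subst h; exact Or.inl hu
  · next hne =>
    split at hQuw
    · next h =>
      rcases h with ⟨hpu, huρ⟩ | ⟨hpw, hwρ⟩
      · by_cases huc : u = c
        · exact Or.inr ⟨huc, by rw [← hpu, huc, hc]⟩
        · obtain ⟨m, hm⟩ := hu
          have hm0 : m ≠ 0 := fun h0 => huc (by rw [← hm, h0]; rfl)
          refine Or.inl ⟨m - 1, ?_⟩
          rw [← hpu]
          calc par^[m-1] (par u) = par^[m-1+1] u := (Function.iterate_succ_apply par (m-1) u).symm
          _ = c := by rw [show m-1+1 = m by omega]; exact hm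
      · obtain ⟨m, hm⟩ := hu
        refine Or.inl ⟨m + 1, ?_⟩
        rw [Function.iterate_succ_apply, hpw, hm]
    · exact absurd rfl hQuw

lemma q_row_v
    (hroot : par ρ = ρ) (hdepth : ∀ v, v ≠ ρ → depth (par v) + 1 = depth v)
    (hQ : ∀ u v, Q u v =
      if u = v then -(a u : ℚ)
      else if (par u = v ∧ u ≠ ρ) ∨ (par v = u ∧ v ≠ ρ) then 1 else 0)
    {v w : V} (hw : ∃ k, par^[k] w = v) (hne : w ≠ v) (hQvw : Q v w ≠ 0) :
    par w = v ∧ w ≠ ρ := by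
  rw [hQ] at hQvw
  split at hQvw
  · next h => exact absurd h.symm hne
  · split at hQvw
    · next h =>
      rcases h with ⟨hpv, hvρ⟩ | h
      · exfalso
        obtain ⟨k, hk⟩ := hw
        have : par^[k+1] v = v := by rw [Function.iterate_succ_apply, hpv, hk]
        exact hvρ (no_cycle hroot hdepth (Nat.succ_ne_zero k) this)
      · exact h
    · exact absurd rfl hQvw

lemma sum_dite_subtype (p : V → Prop) [DecidablePred p] (f : {u : V // p u} → ℚ) :
    ∑ u : V, (if h : p u then f ⟨u, h⟩ else 0) = ∑ u : {u : V // p u}, f u := by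
  calc ∑ u : V, (if h : p u then f ⟨u, h⟩ else 0)
      = ∑ u ∈ Finset.univ.filter p, (if h : p u then f ⟨u, h⟩ else 0) :=
        (Finset.sum_filter_of_ne (by intro x _ hx; by_contra hpx; exact hx (dif_neg hpx))).symm
    _ = ∑ u : {u : V // p u}, (if h : p u.val then f ⟨u.val, h⟩ else 0) :=
        Finset.sum_subtype (Finset.univ.filter p) (by simp) _
    _ = ∑ u : {u : V // p u}, f u := by
        apply Finset.sum_congr rfl
        intro u _
        rw [dif_pos u.prop]

lemma sum_subtype_eq (p : V → Prop) [DecidablePred p] (g : V → ℚ) :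
    ∑ u : {u : V // p u}, g u.val = ∑ u ∈ Finset.univ.filter p, g u :=
  (Finset.sum_subtype _ (by simp) g).symm

lemma det_unit {Q : Matrix V V ℚ} (hneg : ∀ x : V → ℚ, x ≠ 0 → x ⬝ᵥ Q.mulVec x < 0)
    (p : V → Prop) [DecidablePred p] :
    IsUnit (Q.submatrix (Subtype.val : {u : V // p u} → V) Subtype.val).det := by
  set M := Q.submatrix (Subtype.val : {u : V // p u} → V) Subtype.val with hM
  rw [isUnit_iff_ne_zero]
  intro hdet
  obtain ⟨x, hx0, hx⟩ := Matrix.exists_mulVec_eq_zero_iff.mpr hdet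
  set X : V → ℚ := fun u => if h : p u then x ⟨u, h⟩ else 0 with hX
  have hXval : ∀ u : {u : V // p u}, X u.val = x u := by
    intro u; simp only [hX]; rw [dif_pos u.prop]
  have hX0 : X ≠ 0 := by
    intro h
    apply hx0
    funext u
    have := congrFun h u.val
    rw [hXval] at this; exact this
  have hmv : ∀ u : {u : V // p u}, Q.mulVec X u.val = M.mulVec x u := by
    intro u
    simp only [Matrix.mulVec, dotProduct]
    calc ∑ w : V, Q u.val w * X w
        = ∑ w : V, (if h : p w then Q u.val w * x ⟨w, h⟩ else 0) := by
          apply Finset.sum_congr rfl; intro w _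
          simp only [hX, mul_dite, mul_zero]
      _ = ∑ w : {u : V // p u}, Q u.val w.val * x w :=
          sum_dite_subtype p (fun w => Q u.val w.val * x w)
      _ = ∑ w : {u : V // p u}, M u w * x w := by
          apply Finset.sum_congr rfl; intro w _
          simp only [hM, Matrix.submatrix_apply]
  have hdot : X ⬝ᵥ Q.mulVec X = 0 := by
    calc X ⬝ᵥ Q.mulVec X = ∑ u : V, X u * Q.mulVec X u := rfl
    _ = ∑ u : V, (if h : p u then x ⟨u, h⟩ * Q.mulVec X u else 0) := by
        apply Finset.sum_congr rfl; intro u _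
        by_cases h : p u
        · rw [dif_pos h]; simp only [hX, dif_pos h]
        · rw [dif_neg h]; simp only [hX, dif_neg h, zero_mul]
    _ = ∑ u : {u : V // p u}, x u * Q.mulVec X u.val :=
        sum_dite_subtype p (fun u => x u * Q.mulVec X u.val)
    _ = ∑ u : {u : V // p u}, x u * M.mulVec x u := by
        apply Finset.sum_congr rfl; intro u _; rw [hmv]
    _ = x ⬝ᵥ M.mulVec x := rfl
    _ = 0 := by rw [hx, dotProduct_zero]
  exact absurd (hneg X hX0) (by rw [hdot]; exact lt_irrefl 0)

lemma key (ρ : V) (par : V → V) (depth : V → ℕ)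
    (hroot : par ρ = ρ) (hdepth : ∀ v, v ≠ ρ → depth (par v) + 1 = depth v)
    (a : V → ℤ) (Q : Matrix V V ℚ)
    (hQ : ∀ u v, Q u v =
      if u = v then -(a u : ℚ)
      else if (par u = v ∧ u ≠ ρ) ∨ (par v = u ∧ v ≠ ρ) then 1 else 0)
    (hneg : ∀ x : V → ℚ, x ≠ 0 → x ⬝ᵥ Q.mulVec x < 0)
    (b : V → ℚ) (v : V) :
    solAt par Q b v *
        (-(a v : ℚ) + ∑ c ∈ Finset.univ.filter (fun c => par c = v ∧ c ≠ ρ), subAlpha par Q c)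
      = b v - ∑ c ∈ Finset.univ.filter (fun c => par c = v ∧ c ≠ ρ), solAt par Q b c := by
  set P : V → Prop := fun u => ∃ m, par^[m] u = v with hP
  set M : Matrix {u : V // P u} {u : V // P u} ℚ := Q.submatrix Subtype.val Subtype.val with hM
  have hMdet : IsUnit M.det := det_unit hneg P
  set x : {u : V // P u} → ℚ := M⁻¹.mulVec (fun u => b u.val) with hxdef
  have hx : M.mulVec x = fun u => b u.val := by
    rw [hxdef, Matrix.mulVec_mulVec, Matrix.mul_nonsing_inv _ hMdet, Matrix.one_mulVec]
  set X : V → ℚ := fun u => if h : P u then x ⟨u, h⟩ else 0 with hX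
  have hXval : ∀ (w : V) (h : P w), X w = x ⟨w, h⟩ := by
    intro w h; simp only [hX]; rw [dif_pos h]
  set F : Finset V := Finset.univ.filter P with hF
  set C : Finset V := Finset.univ.filter (fun c => par c = v ∧ c ≠ ρ) with hC
  have hvP : P v := ⟨0, rfl⟩
  -- row equations over the Finset F
  have hrow : ∀ u : {u : V // P u}, ∑ w ∈ F, Q u.val w * X w = b u.val := by
    intro u
    have h1 := congrFun hx u
    calc ∑ w ∈ F, Q u.val w * X w
        = ∑ w : {u : V // P u}, Q u.val w.val * X w.val := (sum_subtype_eq P _).symm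
      _ = ∑ w : {u : V // P u}, Q u.val w.val * x w := by
          apply Finset.sum_congr rfl; intro w _; rw [hXval w.val w.prop]
      _ = M.mulVec x u := by
          simp only [hM, Matrix.mulVec, dotProduct, Matrix.submatrix_apply]
      _ = b u.val := h1
  -- membership facts about children
  have hcmem : ∀ c ∈ C, P c := by
    intro c hc
    rw [hC, Finset.mem_filter] at hc
    exact ⟨1, by simp [hc.2.1]⟩
  have hcnev : ∀ c ∈ C, c ≠ v := by
    intro c hc hcv
    rw [hC, Finset.mem_filter] at hc
    apply hc.2.2
    subst hcv
    exact no_cycle hroot hdepth (m := 1) one_ne_zero (by simpa using hc.2.1)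
  -- the child propagation
  have childval : ∀ c ∈ C, X c = solAt par Q b c + X v * subAlpha par Q c := by
    intro c hcC
    have hcC' := hcC
    rw [hC, Finset.mem_filter] at hcC'
    obtain ⟨-, hc, hcρ⟩ := hcC'
    set Pc : V → Prop := fun u => ∃ m, par^[m] u = c with hPc
    set Mc : Matrix {u : V // Pc u} {u : V // Pc u} ℚ := Q.submatrix Subtype.val Subtype.val with hMc
    have hMcdet : IsUnit Mc.det := det_unit hneg Pc
    have hsub : ∀ w, Pc w → P w := fun w hw => mem_trans hw ⟨1, by simp [hc]⟩
    have hFc : Finset.univ.filter Pc ⊆ F := by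
      intro w hw
      rw [Finset.mem_filter] at hw
      rw [hF, Finset.mem_filter]
      exact ⟨Finset.mem_univ w, hsub w hw.2⟩
    have hvPc : ¬ Pc v := parent_not_mem hroot hdepth hc hcρ
    set xc : {u : V // Pc u} → ℚ := fun u => x ⟨u.val, hsub _ u.prop⟩ with hxc
    have hXxc : ∀ u : {u : V // Pc u}, X u.val = xc u := by
      intro u; exact hXval u.val (hsub _ u.prop)
    -- rows of the child system
    have hrowc : Mc.mulVec xc = fun u : {u : V // Pc u} =>
        b u.val - (if u.val = c then X v else 0) := by
      funext u
      have huP : P u.val := hsub _ u.prop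
      have hsplit := Finset.sum_sdiff (f := fun w => Q u.val w * X w) hFc
      -- hsplit : ∑ in F \ Fc + ∑ in Fc = ∑ in F
      have hvmem : v ∈ F \ Finset.univ.filter Pc := by
        rw [Finset.mem_sdiff, hF, Finset.mem_filter, Finset.mem_filter]
        exact ⟨⟨Finset.mem_univ v, hvP⟩, fun h => hvPc h.2⟩
      have houter : ∑ w ∈ F \ Finset.univ.filter Pc, Q u.val w * X w
          = (if u.val = c then X v else 0) := by
        rw [Finset.sum_eq_single_of_mem v hvmem]
        · by_cases huc : u.val = c
          · rw [if_pos huc]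
            have : Q u.val v = 1 := by
              rw [hQ]
              have hcv : u.val ≠ v := fun h => hvPc (h ▸ u.prop)
              rw [if_neg hcv, if_pos (Or.inl ⟨by rw [huc]; exact hc, by rw [huc]; exact hcρ⟩)]
            rw [this, one_mul]
          · rw [if_neg huc]
            have : Q u.val v = 0 := by
              by_contra h
              rcases q_support hroot hdepth hQ hc hcρ u.prop h with h' | h'
              · exact hvPc h'
              · exact huc h'.1
            rw [this, zero_mul]
        · intro w hw hwv
          rw [Finset.mem_sdiff, Finset.mem_filter] at hw
          have : Q u.val w = 0 := by
            by_contra h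
            rcases q_support hroot hdepth hQ hc hcρ u.prop h with h' | h'
            · exact hw.2 (by rw [Finset.mem_filter]; exact ⟨Finset.mem_univ w, h'⟩)
            · exact hwv h'.2
          rw [this, zero_mul]
      have hinner : ∑ w ∈ Finset.univ.filter Pc, Q u.val w * X w = Mc.mulVec xc u := by
        calc ∑ w ∈ Finset.univ.filter Pc, Q u.val w * X w
            = ∑ w : {u : V // Pc u}, Q u.val w.val * X w.val := (sum_subtype_eq Pc _).symm
          _ = ∑ w : {u : V // Pc u}, Mc u w * xc w := by
              apply Finset.sum_congr rfl; intro w _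
              rw [hXxc w]; simp only [hMc, Matrix.submatrix_apply]
          _ = Mc.mulVec xc u := rfl
      have := hrow ⟨u.val, huP⟩
      rw [← hsplit, houter, hinner] at this
      simp only at this ⊢
      linarith [this]
    -- solve the child system
    have hxc_eq : xc = Mc⁻¹.mulVec (fun u : {u : V // Pc u} => b u.val)
        - X v • Mc⁻¹.mulVec ((Pi.single (⟨c, ⟨0, rfl⟩⟩ : {u : V // Pc u}) (1 : ℚ) : {u : V // Pc u} → ℚ)) := by
      have h2 : xc = Mc⁻¹.mulVec (Mc.mulVec xc) := by
        rw [Matrix.mulVec_mulVec, Matrix.nonsing_inv_mul _ hMcdet, Matrix.one_mulVec]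
      rw [h2, hrowc]
      have : (fun u : {u : V // Pc u} => b u.val - (if u.val = c then X v else 0))
          = (fun u : {u : V // Pc u} => b u.val) - X v • (Pi.single (⟨c, ⟨0, rfl⟩⟩ : {u : V // Pc u}) (1 : ℚ) : {u : V // Pc u} → ℚ) := by
        funext u
        simp only [Pi.sub_apply, Pi.smul_apply, smul_eq_mul]
        congr 1
        rw [Pi.single_apply]
        by_cases h : u.val = c
        · rw [if_pos h, if_pos (Subtype.ext h), mul_one]
        · rw [if_neg h, if_neg (fun hh => h (congrArg Subtype.val hh)), mul_zero]
      rw [this, Matrix.mulVec_sub, Matrix.mulVec_smul]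
    have := congrFun hxc_eq ⟨c, ⟨0, rfl⟩⟩
    simp only [Pi.sub_apply, Pi.smul_apply, smul_eq_mul, Matrix.mulVec_single, op_smul_eq_mul, Matrix.col_apply, mul_one] at this
    have hXc : X c = xc ⟨c, ⟨0, rfl⟩⟩ := hXxc ⟨c, ⟨0, rfl⟩⟩
    have hsol : solAt par Q b c
        = (Mc⁻¹.mulVec (fun u : {u : V // Pc u} => b u.val)) ⟨c, ⟨0, rfl⟩⟩ := rfl
    have halc : subAlpha par Q c = -(Mc⁻¹ ⟨c, ⟨0, rfl⟩⟩ ⟨c, ⟨0, rfl⟩⟩) := rfl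
    rw [hXc, this, hsol, halc]
    ring
  -- the row at v
  have hrowv := hrow ⟨v, hvP⟩
  have hvF : v ∈ F := by rw [hF, Finset.mem_filter]; exact ⟨Finset.mem_univ v, hvP⟩
  have hsplitv : ∑ w ∈ F, Q v w * X w
      = Q v v * X v + ∑ w ∈ F.erase v, Q v w * X w := by
    rw [← Finset.add_sum_erase F _ hvF]
  have hCsub : C ⊆ F.erase v := by
    intro c hcC
    rw [Finset.mem_erase]
    exact ⟨hcnev c hcC, by rw [hF, Finset.mem_filter]; exact ⟨Finset.mem_univ c, hcmem c hcC⟩⟩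
  have herase : ∑ w ∈ F.erase v, Q v w * X w = ∑ c ∈ C, X c := by
    rw [← Finset.sum_subset hCsub]
    · apply Finset.sum_congr rfl
      intro c hcC
      have h1 : Q v c = 1 := by
        rw [hQ]
        rw [if_neg (fun h => hcnev c hcC h.symm)]
        rw [hC, Finset.mem_filter] at hcC
        rw [if_pos (Or.inr hcC.2)]
      rw [h1, one_mul]
    · intro w hw hwC
      rw [Finset.mem_erase, hF, Finset.mem_filter] at hw
      have : Q v w = 0 := by
        by_contra h
        apply hwC
        rw [hC, Finset.mem_filter]
        exact ⟨Finset.mem_univ w, q_row_v hroot hdepth hQ hw.2.2 hw.1 h⟩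
      rw [this, zero_mul]
  have hQvv : Q v v = -(a v : ℚ) := by rw [hQ, if_pos rfl]
  have hXv : X v = solAt par Q b v := by
    rw [hXval v hvP]
    rfl
  have heq : -(a v : ℚ) * solAt par Q b v
      + (∑ c ∈ C, (solAt par Q b c + solAt par Q b v * subAlpha par Q c)) = b v := by
    have h1 : ∑ c ∈ C, X c = ∑ c ∈ C, (solAt par Q b c + solAt par Q b v * subAlpha par Q c) := by
      apply Finset.sum_congr rfl
      intro c hcC
      rw [childval c hcC, hXv]
    have h2 := hrowv
    rw [hsplitv, herase, h1, hQvv, hXv] at h2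
    exact h2
  rw [Finset.sum_add_distrib, ← Finset.mul_sum] at heq
  linear_combination heq

end Helpers

/-- The propagation recursion `β_v = -α_v (z_v - Σ_{c ∈ C(v)} β_c)` for a
negative-definite plumbing tree. -/
theorem beta_recursion {V : Type*} [Fintype V] [DecidableEq V]
    (ρ : V) (par : V → V) (depth : V → ℕ)
    (hroot : par ρ = ρ) (hdepth : ∀ v, v ≠ ρ → depth (par v) + 1 = depth v)
    (a : V → ℤ)
    (Q : Matrix V V ℚ)
    (hQ : ∀ u v, Q u v =
      if u = v then -(a u : ℚ)
      else if (par u = v ∧ u ≠ ρ) ∨ (par v = u ∧ v ≠ ρ) then 1 else 0)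
    (hneg : ∀ x : V → ℚ, x ≠ 0 → x ⬝ᵥ Q.mulVec x < 0) :
    ∀ v : V, subBeta par Q a v =
      -(subAlpha par Q v) * (((a v : ℚ) - 2)
        - ∑ c ∈ Finset.univ.filter (fun c => par c = v ∧ c ≠ ρ), subBeta par Q a c) := by
  intro v
  have h1 := key ρ par depth hroot hdepth a Q hQ hneg (fun u => (a u : ℚ) - 2) v
  have hβfun : solAt par Q (fun u => (a u : ℚ) - 2) = subBeta par Q a := rfl
  rw [hβfun] at h1
  have h2 := key ρ par depth hroot hdepth a Q hQ hneg (fun u => if u = v then (1:ℚ) else 0) v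
  have hsolv : solAt par Q (fun u => if u = v then (1:ℚ) else 0) v = -subAlpha par Q v := by
    have hvec : (fun u : {u : V // ∃ m, par^[m] u = v} => if u.val = v then (1:ℚ) else 0)
        = (Pi.single (⟨v, ⟨0, rfl⟩⟩ : {u : V // ∃ m, par^[m] u = v}) (1:ℚ)
            : {u : V // ∃ m, par^[m] u = v} → ℚ) := by
      funext u
      rw [Pi.single_apply]
      by_cases h : u.val = v
      · rw [if_pos h, if_pos (Subtype.ext h)]
      · rw [if_neg h, if_neg (fun hh => h (congrArg Subtype.val hh))]
    rw [solAt, subAlpha, hvec, Matrix.mulVec_single]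
    simp
  have hsolc : ∀ c ∈ Finset.univ.filter (fun c => par c = v ∧ c ≠ ρ),
      solAt par Q (fun u => if u = v then (1:ℚ) else 0) c = 0 := by
    intro c hc
    rw [Finset.mem_filter] at hc
    have hvec : (fun u : {u : V // ∃ m, par^[m] u = c} => if u.val = v then (1:ℚ) else 0)
        = 0 := by
      funext u
      exact if_neg (fun h => parent_not_mem hroot hdepth hc.2.1 hc.2.2
        (by rw [← h]; exact u.prop))
    rw [solAt, hvec, Matrix.mulVec_zero]
    rfl
  rw [hsolv, Finset.sum_congr rfl hsolc, Finset.sum_const, smul_zero, if_pos rfl, sub_zero] at h2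
  linear_combination (-subAlpha par Q v) * h1 - subBeta par Q a v * h2
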